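/- Let T be a finite sharply 2-transitive permutation group on a finite set F with |F| ≥ 2. Then the set of fixed-point-free elements of T together with the identity forms an abelian normal subgroup of T (Jordan's theorem). -/

import Mathlib

/-- An element fixing two distinct points of a sharply 2-transitive action is the identity. -/
lemma aux_fix_two {T F : Type*} [Group T] [MulAction T F]
    (h2 : ∀ a₁ a₂ b₁ b₂ : F, a₁ ≠ a₂ → b₁ ≠ b₂ →
      ∃! t : T, t • a₁ = b₁ ∧ t • a₂ = b₂)
    {t : T} {ε ε' : F} (hne : ε ≠ ε') (hε : t • ε = ε) (hε' : t • ε' = ε') : t = 1 :=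
  (h2 ε ε' ε ε' hne hne).unique ⟨hε, hε'⟩ ⟨one_smul _ _, one_smul _ _⟩

/-- Key counting lemma: for `γ ≠ δ` there is a unique fixed-point-free element
sending `γ` to `δ`. -/
lemma aux_key {T F : Type*} [Group T] [Finite T] [Finite F] [MulAction T F]
    (h2 : ∀ a₁ a₂ b₁ b₂ : F, a₁ ≠ a₂ → b₁ ≠ b₂ →
      ∃! t : T, t • a₁ = b₁ ∧ t • a₂ = b₂)
    {γ δ : F} (hγδ : γ ≠ δ) :
    ∃! t : T, (∀ ε : F, t • ε ≠ ε) ∧ t • γ = δ := by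
  classical
  have _i1 := Fintype.ofFinite T
  have _i2 := Fintype.ofFinite F
  set S : Finset T := Finset.univ.filter (fun t : T => t • γ = δ) with hSdef
  have hmemS : ∀ t : T, t ∈ S ↔ t • γ = δ := by
    intro t; simp [hSdef]
  -- |S| = |F| - 1, via t ↦ t • δ
  have hcardS : S.card = Fintype.card F - 1 := by
    rw [← Finset.card_univ, ← Finset.card_erase_of_mem (Finset.mem_univ δ)]
    refine Finset.card_bij (fun t _ => t • δ) ?_ ?_ ?_
    · intro t ht'
      have ht := (hmemS t).mp ht'
      refine Finset.mem_erase.mpr ⟨?_, Finset.mem_univ _⟩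
      intro h
      refine hγδ (smul_left_cancel t ?_)
      rw [ht]
      exact h.symm
    · intro t₁ ht₁ t₂ ht₂ h
      rw [hmemS] at ht₁ ht₂
      refine (h2 γ δ δ (t₁ • δ) hγδ ?_).unique ⟨ht₁, rfl⟩ ⟨ht₂, h.symm⟩
      intro h'
      exact hγδ (smul_left_cancel t₁ (by rw [ht₁, ← h']))
    · intro b hb
      obtain ⟨hbδ, -⟩ := Finset.mem_erase.mp hb
      obtain ⟨t, ⟨ht1, ht2⟩, -⟩ := h2 γ δ δ b hγδ (Ne.symm hbδ)
      exact ⟨t, (hmemS t).mpr ht1, ht2⟩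
  -- elements of S with a fixed point: exactly |F| - 2 of them
  have hcardSfix : (S.filter (fun t => ∃ ε : F, t • ε = ε)).card = Fintype.card F - 2 := by
    have : (((Finset.univ : Finset F).erase δ).erase γ).card = Fintype.card F - 2 := by
      rw [Finset.card_erase_of_mem (Finset.mem_erase.mpr ⟨hγδ, Finset.mem_univ γ⟩),
        Finset.card_erase_of_mem (Finset.mem_univ δ), Finset.card_univ]
      omega
    rw [← this]
    symm
    have hne : ∀ ε : F, ε ∈ (Finset.univ.erase δ).erase γ → γ ≠ ε ∧ δ ≠ ε := by
      intro ε hε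
      obtain ⟨h1, h2'⟩ := Finset.mem_erase.mp hε
      exact ⟨Ne.symm h1, Ne.symm (Finset.mem_erase.mp h2').1⟩
    refine Finset.card_bij
      (fun ε hε => (h2 γ ε δ ε (hne ε hε).1 (hne ε hε).2).choose) ?_ ?_ ?_
    · intro ε hε
      obtain ⟨hc1, hc2⟩ := (h2 γ ε δ ε (hne ε hε).1 (hne ε hε).2).choose_spec.1
      exact Finset.mem_filter.mpr ⟨(hmemS _).mpr hc1, ⟨ε, hc2⟩⟩
    · intro ε₁ hε₁ ε₂ hε₂ h
      have h' : (h2 γ ε₁ δ ε₁ (hne ε₁ hε₁).1 (hne ε₁ hε₁).2).choose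
          = (h2 γ ε₂ δ ε₂ (hne ε₂ hε₂).1 (hne ε₂ hε₂).2).choose := h
      by_contra hne'
      obtain ⟨hc1, hc2⟩ := (h2 γ ε₁ δ ε₁ (hne ε₁ hε₁).1 (hne ε₁ hε₁).2).choose_spec.1
      obtain ⟨hd1, hd2⟩ := (h2 γ ε₂ δ ε₂ (hne ε₂ hε₂).1 (hne ε₂ hε₂).2).choose_spec.1
      rw [h'] at hc2
      have := aux_fix_two h2 hne' hc2 hd2
      rw [this, one_smul] at hd1
      exact hγδ hd1
    · intro t ht
      obtain ⟨htS, ε, hεfix⟩ := Finset.mem_filter.mp ht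
      rw [hmemS] at htS
      have hεγ : ε ≠ γ := by
        rintro rfl
        exact hγδ (hεfix.symm.trans htS)
      have hεδ : ε ≠ δ := by
        rintro rfl
        exact hεγ (smul_left_cancel t (by rw [htS, hεfix]))
      have hεmem : ε ∈ (Finset.univ.erase δ).erase γ :=
        Finset.mem_erase.mpr ⟨hεγ, Finset.mem_erase.mpr ⟨hεδ, Finset.mem_univ _⟩⟩
      refine ⟨ε, hεmem, ?_⟩
      exact ((h2 γ ε δ ε (hne ε hεmem).1 (hne ε hεmem).2).unique
        (h2 γ ε δ ε (hne ε hεmem).1 (hne ε hεmem).2).choose_spec.1 ⟨htS, hεfix⟩)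
  -- hence exactly one fixed-point-free element in S
  have hsplit := Finset.card_filter_add_card_filter_not
    (s := S) (p := fun t : T => ∃ ε : F, t • ε = ε)
  have hn2 : 2 ≤ Fintype.card F := Fintype.one_lt_card_iff.mpr ⟨γ, δ, hγδ⟩
  have hone : (S.filter (fun t => ¬ ∃ ε : F, t • ε = ε)).card = 1 := by omega
  obtain ⟨t, ht⟩ := Finset.card_eq_one.mp hone
  have htmem : t ∈ S.filter (fun t => ¬ ∃ ε : F, t • ε = ε) := by
    rw [ht]; exact Finset.mem_singleton_self t
  obtain ⟨htS, htnofix⟩ := Finset.mem_filter.mp htmem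
  refine ⟨t, ⟨fun ε h => htnofix ⟨ε, h⟩, (hmemS t).mp htS⟩, ?_⟩
  intro s ⟨hsfpf, hsγ⟩
  have : s ∈ S.filter (fun t => ¬ ∃ ε : F, t • ε = ε) :=
    Finset.mem_filter.mpr ⟨(hmemS s).mpr hsγ, fun ⟨ε, hε⟩ => hsfpf ε hε⟩
  rw [ht] at this
  exact Finset.mem_singleton.mp this

/-- Jordan's theorem: in a finite sharply 2-transitive permutation group `T` on a finite
set `F` (`|F| ≥ 2`), the fixed-point-free elements together with the identity form an
abelian normal subgroup of `T`. -/
theorem stmt_7 (T F : Type*) [Group T] [Finite T] [Finite F] [Nontrivial F]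
    [MulAction T F] [FaithfulSMul T F]
    (h2 : ∀ a₁ a₂ b₁ b₂ : F, a₁ ≠ a₂ → b₁ ≠ b₂ →
      ∃! t : T, t • a₁ = b₁ ∧ t • a₂ = b₂) :
    ∃ A : Subgroup T, A.Normal ∧ (∀ a b : A, a * b = b * a) ∧
      (A : Set T) = {t : T | t = 1 ∨ ∀ γ : F, t • γ ≠ γ} := by
  classical
  set S : Set T := {t : T | t = 1 ∨ ∀ γ : F, t • γ ≠ γ} with hSdef
  -- inverse of fpf is fpf
  have hfpf_inv : ∀ {a : T}, (∀ ε : F, a • ε ≠ ε) → ∀ ε : F, a⁻¹ • ε ≠ ε := by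
    intro a ha ε h
    have := smul_inv_smul a ε
    rw [h] at this
    exact ha ε this
  -- conjugate of fpf is fpf
  have hfpf_conj : ∀ {a : T} (t : T), (∀ ε : F, a • ε ≠ ε) →
      ∀ ε : F, (t * a * t⁻¹) • ε ≠ ε := by
    intro a t ha ε h
    rw [mul_smul, mul_smul] at h
    apply ha (t⁻¹ • ε)
    have := congrArg (fun x => t⁻¹ • x) h
    simpa using this
  -- closure of S under multiplication
  have hSmul : ∀ {a b : T}, a ∈ S → b ∈ S → a * b ∈ S := by
    rintro a b (rfl | ha) hb
    · simpa using hb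
    · rcases hb with rfl | hb
      · rw [mul_one]; exact Or.inr ha
      · by_cases hex : ∃ γ : F, (a * b) • γ = γ
        · left
          obtain ⟨γ, hγ⟩ := hex
          have hδ : γ ≠ b • γ := Ne.symm (hb γ)
          have ha' : a⁻¹ • γ = b • γ := by
            rw [mul_smul] at hγ
            rw [inv_smul_eq_iff]
            exact hγ.symm
          have hba : b = a⁻¹ :=
            (aux_key h2 hδ).unique ⟨hb, rfl⟩ ⟨hfpf_inv ha, ha'⟩
          rw [hba, mul_inv_cancel]
        · right
          intro γ h
          exact hex ⟨γ, h⟩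
  have hSinv : ∀ {a : T}, a ∈ S → a⁻¹ ∈ S := by
    rintro a (rfl | ha)
    · simp [hSdef]
    · exact Or.inr (hfpf_inv ha)
  have hSconj : ∀ {a : T} (t : T), a ∈ S → t * a * t⁻¹ ∈ S := by
    rintro a t (rfl | ha)
    · simp [hSdef]
    · exact Or.inr (hfpf_conj t ha)
  set A : Subgroup T :=
    { carrier := S
      one_mem' := Or.inl rfl
      mul_mem' := fun ha hb => hSmul ha hb
      inv_mem' := fun ha => hSinv ha } with hAdef
  have hmemA : ∀ c : T, c ∈ A ↔ (c = 1 ∨ ∀ γ : F, c • γ ≠ γ) := fun c => Iff.rfl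
  -- a base point
  obtain ⟨γ₀, δ₀, hγδ₀⟩ := exists_pair_ne F
  -- transitivity of conjugation on nontrivial fpf elements
  have htrans : ∀ a b : T, (∀ ε : F, a • ε ≠ ε) → (∀ ε : F, b • ε ≠ ε) →
      ∃ t : T, t * a * t⁻¹ = b := by
    intro a b ha hb
    have haα : γ₀ ≠ a • γ₀ := Ne.symm (ha γ₀)
    have hbα : γ₀ ≠ b • γ₀ := Ne.symm (hb γ₀)
    obtain ⟨t, ⟨ht1, ht2⟩, -⟩ := h2 γ₀ (a • γ₀) γ₀ (b • γ₀) haα hbα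
    refine ⟨t, ?_⟩
    have htinv : t⁻¹ • γ₀ = γ₀ := by rw [inv_smul_eq_iff, ht1]
    have hc : (t * a * t⁻¹) • γ₀ = b • γ₀ := by
      rw [mul_smul, mul_smul, htinv, ht2]
    exact (aux_key h2 hbα).unique ⟨hfpf_conj t ha, hc⟩ ⟨hb, rfl⟩
  -- an fpf element a₁ of prime order q
  obtain ⟨a₀, ⟨ha₀fpf, -⟩, -⟩ := aux_key h2 hγδ₀
  have ha₀ne : a₀ ≠ 1 := by
    rintro rfl
    exact ha₀fpf γ₀ (one_smul T γ₀)
  have hm1 : orderOf a₀ ≠ 1 := fun h => ha₀ne (orderOf_eq_one_iff.mp h)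
  set q : ℕ := (orderOf a₀).minFac with hqdef
  have hq : q.Prime := Nat.minFac_prime hm1
  haveI : Fact q.Prime := ⟨hq⟩
  have hmpos : 0 < orderOf a₀ := orderOf_pos a₀
  set a₁ : T := a₀ ^ (orderOf a₀ / q) with ha₁def
  have ha₁ne : a₁ ≠ 1 := by
    intro h
    have hdvd : orderOf a₀ ∣ orderOf a₀ / q := orderOf_dvd_of_pow_eq_one h
    have hlt : orderOf a₀ / q < orderOf a₀ := Nat.div_lt_self hmpos hq.one_lt
    have hpos : 0 < orderOf a₀ / q :=
      Nat.div_pos (Nat.minFac_le hmpos) hq.pos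
    have := Nat.eq_zero_of_dvd_of_lt hdvd hlt
    omega
  have ha₁q : a₁ ^ q = 1 := by
    rw [ha₁def, ← pow_mul, Nat.div_mul_cancel (Nat.minFac_dvd _), pow_orderOf_eq_one]
  have ha₁ord : orderOf a₁ = q := orderOf_eq_prime ha₁q ha₁ne
  have ha₁A : a₁ ∈ A := pow_mem (Or.inr ha₀fpf) _
  have ha₁fpf : ∀ ε : F, a₁ • ε ≠ ε := by
    rcases (hmemA a₁).mp ha₁A with h | h
    · exact absurd h ha₁ne
    · exact h
  -- every element of A has order dividing q
  have hq_all : ∀ c : T, c ∈ A → c ^ q = 1 := by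
    intro c hc
    rcases (hmemA c).mp hc with rfl | hcfpf
    · exact one_pow q
    · obtain ⟨t, ht⟩ := htrans a₁ c ha₁fpf hcfpf
      have : orderOf c = q := by
        rw [← ht, ← MulAut.conj_apply, MulEquiv.orderOf_eq (MulAut.conj t) a₁, ha₁ord]
      rw [← this, pow_orderOf_eq_one]
  -- A is a q-group, so it has a nontrivial center
  haveI : Nontrivial ↥A := ⟨⟨⟨a₁, ha₁A⟩, 1, fun h => ha₁ne (congrArg Subtype.val h)⟩⟩
  have hpA : IsPGroup q ↥A := by
    intro g
    refine ⟨1, ?_⟩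
    apply Subtype.ext
    rw [pow_one]
    push_cast
    exact hq_all (g : T) g.2
  haveI := hpA.center_nontrivial
  obtain ⟨z, hzne⟩ := exists_ne (1 : Subgroup.center ↥A)
  set zT : T := ((z : ↥A) : T) with hzTdef
  have hzTA : zT ∈ A := (z : ↥A).2
  have hzTne : zT ≠ 1 := by
    intro h
    exact hzne (Subtype.ext (Subtype.ext h))
  have hzTfpf : ∀ ε : F, zT • ε ≠ ε := by
    rcases (hmemA zT).mp hzTA with h | h
    · exact absurd h hzTne
    · exact h
  have hzcomm : ∀ c : T, c ∈ A → zT * c = c * zT := by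
    intro c hc
    have := (Subgroup.mem_center_iff.mp z.2 ⟨c, hc⟩).symm
    exact congrArg Subtype.val this
  -- every element of A is central in A
  have hcomm : ∀ c : T, c ∈ A → ∀ d : T, d ∈ A → c * d = d * c := by
    intro c hc d hd
    rcases (hmemA c).mp hc with rfl | hcfpf
    · rw [one_mul, mul_one]
    · obtain ⟨t, ht⟩ := htrans zT c hzTfpf hcfpf
      have hdA : t⁻¹ * d * t ∈ A := by
        have := hSconj (a := d) t⁻¹ hd
        rwa [inv_inv] at this
      have h := hzcomm (t⁻¹ * d * t) hdA
      calc c * d = t * zT * t⁻¹ * d := by rw [ht]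
        _ = t * (zT * (t⁻¹ * d * t)) * t⁻¹ := by group
        _ = t * ((t⁻¹ * d * t) * zT) * t⁻¹ := by rw [h]
        _ = d * (t * zT * t⁻¹) := by group
        _ = d * c := by rw [ht]
  refine ⟨A, ⟨fun n hn g => hSconj g hn⟩, ?_, rfl⟩
  intro a b
  exact Subtype.ext (hcomm (a : T) a.2 (b : T) b.2)
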